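/- In the setting where $X_3, X_4$ are unit vectors with $X_3^TX_4 = -\hat\theta$, $\hat\psi^2 = 1-\hat\theta$, $X_1 = C(X_3+X_4)/2 + V$, $X_2 = C(X_3+X_4)/2 - V$, $V \perp X_3, X_4$, $C > 1$, $C^2\hat\psi^2/2 < 1$, $\hat\varphi^2 = C^2\hat\psi^2$: for $\beta^0$ supported on $\{1,2\}$ with $\beta_1^0 \ge \beta_2^0 \ge \lambda/\hat\varphi^2$, the vector $\beta^* = (\beta_1^0 - \lambda/\hat\varphi^2, \beta_2^0 - \lambda/\hat\varphi^2, 0, 0)$ satisfies the KKT conditions for the noiseless Lasso (with $|z_3^*| = |z_4^*| = 1/C < 1$), so $\|X(\beta^*-\beta^0)\|_2^2 = 2\lambda^2/\hat\varphi^2$ and $\beta^*_3 = \beta^*_4 = 0$ (no false positives). -/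
import Mathlib


open scoped RealInnerProductSpace

/-- in the setting of Statement 17, the Lasso with β⁰ supported on {1,2}
has no false positives and prediction error 2λ²/φ̂². -/
theorem stmt18 (n : ℕ) (X1 X2 X3 X4 V : EuclideanSpace ℝ (Fin n)) (θ C lam β10 β20 : ℝ)
    (h3 : ‖X3‖ = 1) (h4 : ‖X4‖ = 1) (hθ : ⟪X3, X4⟫ = -θ)
    (hψ0 : 0 < 1 - θ) (hψ1 : 1 - θ < 1)
    (hX1 : X1 = (C / 2) • (X3 + X4) + V)
    (hX2 : X2 = (C / 2) • (X3 + X4) - V)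
    (hV3 : ⟪V, X3⟫ = 0) (hV4 : ⟪V, X4⟫ = 0)
    (hVnorm : ‖V‖ ^ 2 = 1 - C ^ 2 * (1 - θ) / 2)
    (hC : 1 < C) (hC2 : C ^ 2 * (1 - θ) / 2 < 1)
    (hlam : 0 < lam)
    (hβ : β10 ≥ β20) (hβ2 : β20 ≥ lam / (C ^ 2 * (1 - θ))) :
    (∀ b1 b2 b3 b4 : ℝ,
      ‖((β10 - lam / (C ^ 2 * (1 - θ))) - β10) • X1
            + ((β20 - lam / (C ^ 2 * (1 - θ))) - β20) • X2
            + (0 : ℝ) • X3 + (0 : ℝ) • X4‖ ^ 2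
          + 2 * lam * (|β10 - lam / (C ^ 2 * (1 - θ))|
            + |β20 - lam / (C ^ 2 * (1 - θ))| + |(0 : ℝ)| + |(0 : ℝ)|)
        ≤ ‖(b1 - β10) • X1 + (b2 - β20) • X2 + b3 • X3 + b4 • X4‖ ^ 2
          + 2 * lam * (|b1| + |b2| + |b3| + |b4|)) ∧
    ‖((β10 - lam / (C ^ 2 * (1 - θ))) - β10) • X1
        + ((β20 - lam / (C ^ 2 * (1 - θ))) - β20) • X2
        + (0 : ℝ) • X3 + (0 : ℝ) • X4‖ ^ 2
      = 2 * lam ^ 2 / (C ^ 2 * (1 - θ)) := by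
  have hC0 : (0 : ℝ) < C := by linarith
  have hφ2 : (0 : ℝ) < C ^ 2 * (1 - θ) := by positivity
  -- norm of a general combination of X3, X4, V
  have key : ∀ p q r : ℝ, ‖p • X3 + q • X4 + r • V‖ ^ 2
      = p ^ 2 + q ^ 2 - 2 * θ * p * q + r ^ 2 * (1 - C ^ 2 * (1 - θ) / 2) := by
    intro p q r
    have e3 : ⟪X3, X3⟫ = 1 := by rw [real_inner_self_eq_norm_sq, h3]; norm_num
    have e4 : ⟪X4, X4⟫ = 1 := by rw [real_inner_self_eq_norm_sq, h4]; norm_num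
    have eV : ⟪V, V⟫ = 1 - C ^ 2 * (1 - θ) / 2 := by rw [real_inner_self_eq_norm_sq, hVnorm]
    have e43 : ⟪X4, X3⟫ = -θ := by rw [real_inner_comm]; exact hθ
    have e3V : ⟪X3, V⟫ = 0 := by rw [real_inner_comm]; exact hV3
    have e4V : ⟪X4, V⟫ = 0 := by rw [real_inner_comm]; exact hV4
    rw [← real_inner_self_eq_norm_sq]
    simp only [inner_add_left, inner_add_right, real_inner_smul_left, real_inner_smul_right,
      e3, e4, eV, e43, e3V, e4V, hθ, hV3, hV4]
    ring
  have vec : ∀ s t b3 b4 : ℝ, s • X1 + t • X2 + b3 • X3 + b4 • X4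
      = (C * (s + t) / 2 + b3) • X3 + (C * (s + t) / 2 + b4) • X4 + (s - t) • V := by
    intro s t b3 b4
    rw [hX1, hX2]; module
  have nrm : ∀ s t b3 b4 : ℝ, ‖s • X1 + t • X2 + b3 • X3 + b4 • X4‖ ^ 2
      = (C * (s + t) / 2 + b3) ^ 2 + (C * (s + t) / 2 + b4) ^ 2
        - 2 * θ * (C * (s + t) / 2 + b3) * (C * (s + t) / 2 + b4)
        + (s - t) ^ 2 * (1 - C ^ 2 * (1 - θ) / 2) := by
    intro s t b3 b4
    rw [vec s t b3 b4, key]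
  set d := lam / (C ^ 2 * (1 - θ)) with hdd
  have hd0 : 0 < d := by positivity
  have hd : lam = d * (C ^ 2 * (1 - θ)) := by
    rw [hdd]; field_simp
  have habs1 : |β10 - d| = β10 - d := abs_of_nonneg (by linarith)
  have habs2 : |β20 - d| = β20 - d := abs_of_nonneg (by linarith)
  constructor
  · intro b1 b2 b3 b4
    rw [nrm, nrm, habs1, habs2, abs_zero]
    have m1 : b1 ≤ |b1| := le_abs_self b1
    have m2 : b2 ≤ |b2| := le_abs_self b2
    have m3 : b3 ≤ C * |b3| :=
      le_trans (le_abs_self b3) (le_mul_of_one_le_left (abs_nonneg b3) hC.le)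
    have m4 : b4 ≤ C * |b4| :=
      le_trans (le_abs_self b4) (le_mul_of_one_le_left (abs_nonneg b4) hC.le)
    have hθ0 : 0 < θ := by linarith
    have hVV : 0 < 1 - C ^ 2 * (1 - θ) / 2 := by linarith
    rw [hd]
    have e1 : 0 ≤ ((1 + θ) * (b3 - b4) ^ 2) / 2 := by positivity
    have e2 : 0 ≤ ((1 - θ) * (C * ((b1 - β10) + (b2 - β20)) + b3 + b4 + 2 * C * d) ^ 2) / 2 :=
      by positivity
    have e3 : 0 ≤ ((b1 - β10) - (b2 - β20)) ^ 2 * (1 - C ^ 2 * (1 - θ) / 2) :=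
      mul_nonneg (sq_nonneg _) (by linarith)
    have e4 : 0 ≤ 2 * (d * (C ^ 2 * (1 - θ))) * (|b1| - b1) :=
      mul_nonneg (by positivity) (by linarith)
    have e5 : 0 ≤ 2 * (d * (C ^ 2 * (1 - θ))) * (|b2| - b2) :=
      mul_nonneg (by positivity) (by linarith)
    have e6 : 0 ≤ 2 * (d * C * (1 - θ)) * (C * |b3| - b3) :=
      mul_nonneg (by positivity) (by linarith)
    have e7 : 0 ≤ 2 * (d * C * (1 - θ)) * (C * |b4| - b4) :=
      mul_nonneg (by positivity) (by linarith)
    linarith [e1, e2, e3, e4, e5, e6, e7]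
  · rw [nrm]
    rw [hd]
    field_simp
    ring
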